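/- Let G be a graph that is P̂₄-free and contains no K₄ as a subgraph. Then there exists a triangle-free spanning subgraph G′ of G whose number of edges is at least 2·t(G), where t(G) is the number of triangles of G. -/
import Mathlib


/-- `H` is contained in `G` as a (not necessarily induced) subgraph:
there is an injective map of vertices carrying edges of `H` to edges of `G`. -/
def Contains {α β : Type*} (H : SimpleGraph α) (G : SimpleGraph β) : Prop :=
  ∃ f : α → β, Function.Injective f ∧ ∀ ⦃a b⦄, H.Adj a b → G.Adj (f a) (f b)

/-- The suspension `P̂₄` of the path on 4 vertices: a new apex vertex `none`
is joined to all four vertices of `P₄`. -/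
def hatP4 : SimpleGraph (Option (Fin 4)) :=
  SimpleGraph.fromRel (fun a b =>
    (∃ i j, a = some i ∧ b = some j ∧ (SimpleGraph.pathGraph 4).Adj i j) ∨ a = none)

/-- The number of triangles (3-cliques) of a graph. -/
noncomputable def triangleCount {V : Type*} (G : SimpleGraph V) : ℕ :=
  (G.cliqueSet 3).ncard

/-- `e` is an edge whose only triangle is `t`. -/
def EPriv {V : Type} (G : SimpleGraph V) (e : Sym2 V) (t : Finset V) : Prop :=
  ∀ t' ∈ G.cliqueSet 3, (∀ v ∈ e, v ∈ t') → t' = t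

lemma no_two_nonpriv {V : Type} (G : SimpleGraph V)
    (hP4 : ¬ Contains hatP4 G) (hK4 : ¬ Contains (⊤ : SimpleGraph (Fin 4)) G)
    {a b c c' b' : V} (hab : G.Adj a b) (hac : G.Adj a c) (hbc : G.Adj b c)
    (hc'c : c' ≠ c) (hc'a : G.Adj c' a) (hc'b : G.Adj c' b)
    (hb'b : b' ≠ b) (hb'a : G.Adj b' a) (hb'c : G.Adj b' c) : False := by
  have hba := hab.symm; have hca := hac.symm; have hcb := hbc.symm
  have hac' := hc'a.symm; have hbc' := hc'b.symm
  have hab' := hb'a.symm; have hcb' := hb'c.symm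
  have nab := hab.ne; have nac := hac.ne; have nbc := hbc.ne
  have nc'a := hc'a.ne; have nc'b := hc'b.ne
  have nb'a := hb'a.ne; have nb'c := hb'c.ne
  by_cases h : c' = b'
  · subst h
    have hc'c' : G.Adj c' c := hb'c
    apply hK4
    refine ⟨![a, b, c, c'], ?_, ?_⟩
    · intro i j hij
      fin_cases i <;> fin_cases j <;> simp_all
    · intro i j hij
      fin_cases i <;> fin_cases j <;> simp_all
  · apply hP4
    refine ⟨fun o => o.elim a ![c', b, c, b'], ?_, ?_⟩
    · intro x y hxy
      rcases x with _ | i <;> rcases y with _ | j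
      · rfl
      · fin_cases j <;> simp_all
      · fin_cases i <;> simp_all
      · fin_cases i <;> fin_cases j <;> simp_all
    · intro x y hxy
      rw [hatP4, SimpleGraph.fromRel_adj] at hxy
      rcases x with _ | i <;> rcases y with _ | j
      · simp at hxy
      · fin_cases j <;> simp_all
      · fin_cases i <;> simp_all
      · fin_cases i <;> fin_cases j <;>
          simp_all [SimpleGraph.pathGraph_adj] <;>
          first | assumption | (exfalso; revert hxy; decide)

/-- If the only common neighbour of `a` and `b` is `c`, then the only triangle
containing the edge `ab` is `{a,b,c}`. -/
lemma priv_of_unique {V : Type} [DecidableEq V] (G : SimpleGraph V) {a b c : V}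
    (hab : G.Adj a b)
    (hu : ∀ d, G.Adj d a → G.Adj d b → d = c) :
    EPriv G s(a, b) ({a, b, c} : Finset V) := by
  intro t' ht' hin
  rw [SimpleGraph.mem_cliqueSet_iff, SimpleGraph.is3Clique_iff] at ht'
  have hat : a ∈ t' := hin a (by simp)
  have hbt : b ∈ t' := hin b (by simp)
  obtain ⟨x, y, z, hxy, hxz, hyz, rfl⟩ := ht'
  -- find the third vertex d
  have key : ∀ d ∈ ({x, y, z} : Finset V), d ≠ a → d ≠ b → d = c := by
    intro d hd hda hdb
    -- d is adjacent to both a and b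
    have hpair : ∀ u v : V, u ∈ ({x, y, z} : Finset V) → v ∈ ({x, y, z} : Finset V) →
        u ≠ v → G.Adj u v := by
      intro u v hu hv huv
      simp only [Finset.mem_insert, Finset.mem_singleton] at hu hv
      rcases hu with rfl | rfl | rfl <;> rcases hv with rfl | rfl | rfl <;>
        first | exact absurd rfl huv | assumption |
          (first | exact hxy.symm | exact hxz.symm | exact hyz.symm)
    exact hu d (hpair d a hd hat hda) (hpair d b hd hbt hdb)
  have hsub : ({x, y, z} : Finset V) ⊆ ({a, b, c} : Finset V) := by
    intro v hv
    rcases eq_or_ne v a with rfl | hva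
    · simp
    rcases eq_or_ne v b with rfl | hvb
    · simp
    have := key v hv hva hvb
    subst this
    simp
  refine Finset.eq_of_subset_of_card_le hsub ?_
  have h1 : ({x, y, z} : Finset V).card = 3 :=
    Finset.card_eq_three.mpr ⟨x, y, z, hxy.ne, hxz.ne, hyz.ne, rfl⟩
  have h2 : ({a, b, c} : Finset V).card ≤ 3 := by
    apply le_trans (Finset.card_insert_le _ _)
    apply Nat.succ_le_succ
    apply le_trans (Finset.card_insert_le _ _)
    simp
  omega

set_option maxHeartbeats 2000000 in
lemma two_private {V : Type} [DecidableEq V] (G : SimpleGraph V)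
    (hP4 : ¬ Contains hatP4 G) (hK4 : ¬ Contains (⊤ : SimpleGraph (Fin 4)) G)
    {t : Finset V} (ht : t ∈ G.cliqueSet 3) :
    ∃ e₁ e₂ : Sym2 V, e₁ ≠ e₂ ∧ e₁ ∈ G.edgeSet ∧ e₂ ∈ G.edgeSet ∧
      (∀ v ∈ e₁, v ∈ t) ∧ (∀ v ∈ e₂, v ∈ t) ∧ EPriv G e₁ t ∧ EPriv G e₂ t := by
  rw [SimpleGraph.mem_cliqueSet_iff, SimpleGraph.is3Clique_iff] at ht
  obtain ⟨a, b, c, hab, hac, hbc, rfl⟩ := ht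
  have nab := hab.ne; have nac := hac.ne; have nbc := hbc.ne
  -- at most one of the three can fail
  have habac : ¬ (∀ d, G.Adj d a → G.Adj d b → d = c) → ¬ (∀ d, G.Adj d a → G.Adj d c → d = b) → False := by
    intro h1 h2
    push_neg at h1 h2
    obtain ⟨d, hda, hdb, hdc⟩ := h1
    obtain ⟨d', hd'a, hd'c, hd'b⟩ := h2
    exact no_two_nonpriv G hP4 hK4 hab hac hbc hdc hda hdb hd'b hd'a hd'c
  have habbc : ¬ (∀ d, G.Adj d a → G.Adj d b → d = c) → ¬ (∀ d, G.Adj d b → G.Adj d c → d = a) → False := by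
    intro h1 h2
    push_neg at h1 h2
    obtain ⟨d, hda, hdb, hdc⟩ := h1
    obtain ⟨d', hd'b, hd'c, hd'a⟩ := h2
    exact no_two_nonpriv G hP4 hK4 hab.symm hbc hac hdc hdb hda hd'a hd'b hd'c
  have hacbc : ¬ (∀ d, G.Adj d a → G.Adj d c → d = b) → ¬ (∀ d, G.Adj d b → G.Adj d c → d = a) → False := by
    intro h1 h2
    push_neg at h1 h2
    obtain ⟨d, hda, hdc, hdb⟩ := h1
    obtain ⟨d', hd'b, hd'c, hd'a⟩ := h2
    exact no_two_nonpriv G hP4 hK4 hac.symm hbc.symm hab hdb hdc hda hd'a hd'c hd'b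
  have habE : s(a, b) ∈ G.edgeSet := hab
  have hacE : s(a, c) ∈ G.edgeSet := hac
  have hbcE : s(b, c) ∈ G.edgeSet := hbc
  have hinab : ∀ v ∈ s(a, b), v ∈ ({a, b, c} : Finset V) := by
    intro v hv; rw [Sym2.mem_iff] at hv; rcases hv with rfl | rfl <;> simp
  have hinac : ∀ v ∈ s(a, c), v ∈ ({a, b, c} : Finset V) := by
    intro v hv; rw [Sym2.mem_iff] at hv; rcases hv with rfl | rfl <;> simp
  have hinbc : ∀ v ∈ s(b, c), v ∈ ({a, b, c} : Finset V) := by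
    intro v hv; rw [Sym2.mem_iff] at hv; rcases hv with rfl | rfl <;> simp
  have neabac : s(a, b) ≠ s(a, c) := by simp [Sym2.eq_iff]; tauto
  have neabbc : s(a, b) ≠ s(b, c) := by simp [Sym2.eq_iff]; tauto
  have neacbc : s(a, c) ≠ s(b, c) := by simp [Sym2.eq_iff]; tauto
  have privab : (∀ d, G.Adj d a → G.Adj d b → d = c) → EPriv G s(a, b) ({a, b, c} : Finset V) := fun h =>
    priv_of_unique G hab h
  have privac : (∀ d, G.Adj d a → G.Adj d c → d = b) → EPriv G s(a, c) ({a, b, c} : Finset V) := by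
    intro h
    have := priv_of_unique G hac h
    have hrw : ({a, c, b} : Finset V) = {a, b, c} := by
      ext v; simp; tauto
    rwa [hrw] at this
  have privbc : (∀ d, G.Adj d b → G.Adj d c → d = a) → EPriv G s(b, c) ({a, b, c} : Finset V) := by
    intro h
    have := priv_of_unique G hbc h
    have hrw : ({b, c, a} : Finset V) = {a, b, c} := by
      ext v; simp; tauto
    rwa [hrw] at this
  by_cases h1 : (∀ d, G.Adj d a → G.Adj d b → d = c)
  · by_cases h2 : (∀ d, G.Adj d a → G.Adj d c → d = b)
    · exact ⟨s(a, b), s(a, c), neabac, habE, hacE, hinab, hinac, privab h1, privac h2⟩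
    · have h3 : (∀ d, G.Adj d b → G.Adj d c → d = a) := by by_contra h3; exact hacbc h2 h3
      exact ⟨s(a, b), s(b, c), neabbc, habE, hbcE, hinab, hinbc, privab h1, privbc h3⟩
  · have h2 : (∀ d, G.Adj d a → G.Adj d c → d = b) := by by_contra h2; exact habac h1 h2
    have h3 : (∀ d, G.Adj d b → G.Adj d c → d = a) := by by_contra h3; exact habbc h1 h3
    exact ⟨s(a, c), s(b, c), neacbc, hacE, hbcE, hinac, hinbc, privac h2, privbc h3⟩


/-- If `G` is `P̂₄`-free and `K₄`-free, then `G` has a triangle-free spanning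
subgraph `G'` with at least `2 · t(G)` edges. -/
theorem stmt_16 {V : Type} [Fintype V] (G : SimpleGraph V)
    (hP4 : ¬ Contains hatP4 G) (hK4 : ¬ Contains (⊤ : SimpleGraph (Fin 4)) G) :
    ∃ G' : SimpleGraph V, G' ≤ G ∧ G'.CliqueFree 3 ∧
      2 * triangleCount G ≤ G'.edgeSet.ncard := by
  classical
  set T := G.cliqueFinset 3 with hT
  have H : ∀ t : {t // t ∈ T}, ∃ p : Sym2 V × Sym2 V, p.1 ≠ p.2 ∧
      p.1 ∈ G.edgeSet ∧ p.2 ∈ G.edgeSet ∧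
      (∀ v ∈ p.1, v ∈ t.1) ∧ (∀ v ∈ p.2, v ∈ t.1) ∧
      EPriv G p.1 t.1 ∧ EPriv G p.2 t.1 := by
    rintro ⟨t, ht⟩
    have ht' : t ∈ G.cliqueSet 3 := by
      rwa [SimpleGraph.mem_cliqueSet_iff, ← SimpleGraph.mem_cliqueFinset_iff]
    obtain ⟨e₁, e₂, h1, h2, h3, h4, h5, h6, h7⟩ := two_private G hP4 hK4 ht'
    exact ⟨(e₁, e₂), h1, h2, h3, h4, h5, h6, h7⟩
  choose p hne hE1 hE2 hin1 hin2 hpriv1 hpriv2 using H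
  set S : Finset (Sym2 V) := T.attach.biUnion (fun t => {(p t).1, (p t).2}) with hS
  -- membership characterization
  have hmemS : ∀ e ∈ S, ∃ t : {t // t ∈ T}, e = (p t).1 ∨ e = (p t).2 := by
    intro e he
    rw [hS, Finset.mem_biUnion] at he
    obtain ⟨t, _, het⟩ := he
    simp only [Finset.mem_insert, Finset.mem_singleton] at het
    exact ⟨t, het⟩
  have hSE : ∀ e ∈ S, e ∈ G.edgeSet := by
    intro e he
    obtain ⟨t, h | h⟩ := hmemS e he
    · rw [h]; exact hE1 t
    · rw [h]; exact hE2 t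
  -- each element of S is private to the triangle producing it
  have hSpriv : ∀ e ∈ S, ∃ t : {t // t ∈ T},
      (e = (p t).1 ∨ e = (p t).2) ∧ EPriv G e t.1 := by
    intro e he
    obtain ⟨t, h | h⟩ := hmemS e he
    · exact ⟨t, Or.inl h, h ▸ hpriv1 t⟩
    · exact ⟨t, Or.inr h, h ▸ hpriv2 t⟩
  -- the graph
  refine ⟨SimpleGraph.fromEdgeSet ↑S, ?_, ?_, ?_⟩
  · intro v w h
    rw [SimpleGraph.fromEdgeSet_adj] at h
    exact (SimpleGraph.mem_edgeSet G).mp (hSE _ h.1)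
  · intro s hs
    rw [SimpleGraph.is3Clique_iff] at hs
    obtain ⟨a, b, c, hab, hac, hbc, rfl⟩ := hs
    rw [SimpleGraph.fromEdgeSet_adj] at hab hac hbc
    obtain ⟨hab, nab⟩ := hab
    obtain ⟨hac, nac⟩ := hac
    obtain ⟨hbc, nbc⟩ := hbc
    have hGab : G.Adj a b := (SimpleGraph.mem_edgeSet G).mp (hSE _ hab)
    have hGac : G.Adj a c := (SimpleGraph.mem_edgeSet G).mp (hSE _ hac)
    have hGbc : G.Adj b c := (SimpleGraph.mem_edgeSet G).mp (hSE _ hbc)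
    have ht0 : ({a, b, c} : Finset V) ∈ T := by
      rw [hT, SimpleGraph.mem_cliqueFinset_iff]
      exact SimpleGraph.is3Clique_triple_iff.mpr ⟨hGab, hGac, hGbc⟩
    set t0 : {t // t ∈ T} := ⟨{a, b, c}, ht0⟩ with ht0def
    have hcs : ({a, b, c} : Finset V) ∈ G.cliqueSet 3 := by
      rw [SimpleGraph.mem_cliqueSet_iff, ← SimpleGraph.mem_cliqueFinset_iff]
      exact ht0
    -- each of the three edges is in the pair of t0
    have key : ∀ x y : V, x ∈ ({a, b, c} : Finset V) → y ∈ ({a, b, c} : Finset V) →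
        s(x, y) ∈ S → s(x, y) ∈ ({(p t0).1, (p t0).2} : Finset (Sym2 V)) := by
      intro x y hx hy hxy
      obtain ⟨t, hmem, hpriv⟩ := hSpriv _ hxy
      have : ({a, b, c} : Finset V) = t.1 := by
        apply hpriv _ hcs
        intro v hv
        rw [Sym2.mem_iff] at hv
        rcases hv with rfl | rfl <;> assumption
      have htt : t = t0 := Subtype.ext this.symm
      rw [← htt]
      simpa using hmem
    have k1 := key a b (by simp) (by simp) hab
    have k2 := key a c (by simp) (by simp) hac
    have k3 := key b c (by simp) (by simp) hbc
    have hsub : ({s(a, b), s(a, c), s(b, c)} : Finset (Sym2 V)) ⊆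
        ({(p t0).1, (p t0).2} : Finset (Sym2 V)) := by
      intro e he
      simp only [Finset.mem_insert, Finset.mem_singleton] at he
      rcases he with rfl | rfl | rfl <;> assumption
    have h3 : ({s(a, b), s(a, c), s(b, c)} : Finset (Sym2 V)).card = 3 :=
      Finset.card_eq_three.mpr ⟨_, _, _,
        (by simp [Sym2.eq_iff]; tauto : s(a, b) ≠ s(a, c)),
        (by simp [Sym2.eq_iff]; tauto : s(a, b) ≠ s(b, c)),
        (by simp [Sym2.eq_iff]; tauto : s(a, c) ≠ s(b, c)), rfl⟩
    have h2 : ({(p t0).1, (p t0).2} : Finset (Sym2 V)).card ≤ 2 := by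
      apply le_trans (Finset.card_insert_le _ _); simp
    have := Finset.card_le_card hsub
    omega
  · -- counting
    have hdisj : ∀ t ∈ T.attach, ∀ u ∈ T.attach, t ≠ u →
        Disjoint ({(p t).1, (p t).2} : Finset (Sym2 V)) {(p u).1, (p u).2} := by
      intro t _ u _ htu
      rw [Finset.disjoint_left]
      intro e het heu
      simp only [Finset.mem_insert, Finset.mem_singleton] at het heu
      have hpt : EPriv G e t.1 := by
        rcases het with rfl | rfl
        exacts [hpriv1 t, hpriv2 t]
      have hut : u.1 ∈ G.cliqueSet 3 := by
        rw [SimpleGraph.mem_cliqueSet_iff, ← SimpleGraph.mem_cliqueFinset_iff]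
        exact u.2
      have hinu : ∀ v ∈ e, v ∈ u.1 := by
        rcases heu with rfl | rfl
        exacts [hin1 u, hin2 u]
      exact htu (Subtype.ext (hpt u.1 hut hinu)).symm
    have hcard : S.card = 2 * T.card := by
      rw [hS, Finset.card_biUnion hdisj]
      have : ∀ t ∈ T.attach, ({(p t).1, (p t).2} : Finset (Sym2 V)).card = 2 := by
        intro t _
        rw [Finset.card_insert_of_notMem (by simpa using hne t), Finset.card_singleton]
      rw [Finset.sum_congr rfl this, Finset.sum_const, Finset.card_attach, smul_eq_mul,
        Nat.mul_comm]
    have hedge : (SimpleGraph.fromEdgeSet (↑S : Set (Sym2 V))).edgeSet = ↑S := by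
      rw [SimpleGraph.edgeSet_fromEdgeSet]
      rw [sdiff_eq_self_iff_disjoint, Set.disjoint_left]
      intro e hediag heS
      exact (SimpleGraph.not_isDiag_of_mem_edgeSet G (hSE e heS)) hediag
    rw [hedge, Set.ncard_coe_finset, hcard]
    have : triangleCount G = T.card := by
      rw [triangleCount, ← SimpleGraph.coe_cliqueFinset, Set.ncard_coe_finset, hT]
    omega
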